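/- Let X be a δ-hyperbolic geodesic metric space and let p be a k-local geodesic with k > 8δ. Then: (1) p lies in the 2δ-neighborhood of any geodesic segment q joining p₋ to p₊; (2) q lies in the 3δ-neighborhood of p; (3) p is a (λ, c)-quasi-geodesic with λ = (k+4δ)/(k−4δ) and c = 2δ. -/
import Mathlib

open Metric


/-- `p` restricted to `[a, b]` is a geodesic parametrized by arclength. -/
def IsGeodParam {X : Type*} [MetricSpace X] (p : ℝ → X) (a b : ℝ) : Prop :=
  ∀ s ∈ Set.Icc a b, ∀ t ∈ Set.Icc a b, dist (p s) (p t) = |s - t|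

/-- `X` is a geodesic metric space. -/
def GeodesicSpace (X : Type*) [MetricSpace X] : Prop :=
  ∀ x y : X, ∃ p : ℝ → X, IsGeodParam p 0 (dist x y) ∧ p 0 = x ∧ p (dist x y) = y

/-- `p` restricted to `[a, b]`, parametrized by arclength, is a `(lam, c)`-quasi-geodesic. -/
def IsQGParam {X : Type*} [MetricSpace X] (lam c : ℝ) (p : ℝ → X) (a b : ℝ) : Prop :=
  (∀ s ∈ Set.Icc a b, ∀ t ∈ Set.Icc a b, dist (p s) (p t) ≤ |s - t|) ∧
  (∀ s ∈ Set.Icc a b, ∀ t ∈ Set.Icc a b, |s - t| ≤ lam * dist (p s) (p t) + c)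

/-- All geodesic triangles of `X` are `δ`-slim: each side is contained in the
`δ`-neighborhood of the union of the other two sides. -/
def DeltaSlimSpace (X : Type*) [MetricSpace X] (δ : ℝ) : Prop :=
  ∀ (x y z : X) (p q r : ℝ → X),
    IsGeodParam p 0 (dist x y) → p 0 = x → p (dist x y) = y →
    IsGeodParam q 0 (dist y z) → q 0 = y → q (dist y z) = z →
    IsGeodParam r 0 (dist x z) → r 0 = x → r (dist x z) = z →
    ∀ s ∈ Set.Icc (0 : ℝ) (dist x y),
      Metric.infDist (p s) (q '' Set.Icc 0 (dist y z) ∪ r '' Set.Icc 0 (dist x z)) ≤ δ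

/-- `p` restricted to `[a, b]` is a `k`-local geodesic: every subpath of length at most
`k` is a geodesic. -/
def IsLocalGeodesic {X : Type*} [MetricSpace X] (k : ℝ) (p : ℝ → X) (a b : ℝ) : Prop :=
  ∀ s ∈ Set.Icc a b, ∀ t ∈ Set.Icc a b, |s - t| ≤ k → dist (p s) (p t) = |s - t|

lemma local_lip_aux {X : Type*} [MetricSpace X] {k : ℝ} {p : ℝ → X} {ℓ : ℝ}
    (hk : 0 < k) (hp : IsLocalGeodesic k p 0 ℓ) :
    ∀ n : ℕ, ∀ s ∈ Set.Icc (0:ℝ) ℓ, ∀ t ∈ Set.Icc (0:ℝ) ℓ, s ≤ t → t - s ≤ n * k →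
      dist (p s) (p t) ≤ t - s := by
  intro n
  induction n with
  | zero =>
    intro s hs t ht hst h
    push_cast at h
    have : t = s := le_antisymm (by linarith) hst
    subst this
    simp
  | succ n ih =>
    intro s hs t ht hst h
    rcases le_or_gt (t - s) k with h1 | h1
    · exact le_of_eq (by rw [hp s hs t ht (by rw [abs_sub_comm, abs_of_nonneg (by linarith)]; exact h1), abs_sub_comm, abs_of_nonneg (by linarith)])
    · have hm : t - k ∈ Set.Icc (0:ℝ) ℓ := ⟨by linarith [hs.1], by linarith [ht.2]⟩
      have habs : |t - k - t| = k := by rw [show t - k - t = -k by ring, abs_neg, abs_of_pos hk]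
      have h2 : dist (p (t-k)) (p t) = k := by
        rw [hp _ hm _ ht (le_of_eq habs), habs]
      have h3 : dist (p s) (p (t-k)) ≤ (t - k) - s := by
        apply ih s hs _ hm (by linarith)
        push_cast at h ⊢
        linarith
      calc dist (p s) (p t) ≤ dist (p s) (p (t-k)) + dist (p (t-k)) (p t) := dist_triangle _ _ _
        _ ≤ t - s := by rw [h2]; linarith
lemma local_lip {X : Type*} [MetricSpace X] {k : ℝ} {p : ℝ → X} {ℓ : ℝ}
    (hk : 0 < k) (hp : IsLocalGeodesic k p 0 ℓ) :
    ∀ s ∈ Set.Icc (0:ℝ) ℓ, ∀ t ∈ Set.Icc (0:ℝ) ℓ, dist (p s) (p t) ≤ |s - t| := by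
  have key : ∀ s ∈ Set.Icc (0:ℝ) ℓ, ∀ t ∈ Set.Icc (0:ℝ) ℓ, s ≤ t → dist (p s) (p t) ≤ t - s := by
    intro s hs t ht hst
    refine local_lip_aux hk hp ⌈(t-s)/k⌉₊ s hs t ht hst ?_
    have := Nat.le_ceil ((t-s)/k)
    calc t - s = (t-s)/k * k := by field_simp
      _ ≤ ⌈(t-s)/k⌉₊ * k := by gcongr
  intro s hs t ht
  rcases le_total s t with h | h
  · rw [abs_sub_comm, abs_of_nonneg (by linarith)]; exact key s hs t ht h
  · rw [abs_of_nonneg (by linarith), dist_comm]; exact key t ht s hs h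
lemma local_contOn {X : Type*} [MetricSpace X] {k : ℝ} {p : ℝ → X} {ℓ : ℝ}
    (hk : 0 < k) (hp : IsLocalGeodesic k p 0 ℓ) :
    ContinuousOn p (Set.Icc 0 ℓ) := by
  apply LipschitzOnWith.continuousOn (K := 1)
  apply LipschitzOnWith.of_dist_le_mul
  intro x hx y hy
  simpa [Real.dist_eq] using local_lip hk hp x hx y hy
lemma geod_contOn {X : Type*} [MetricSpace X] {q : ℝ → X} {a b : ℝ}
    (hq : IsGeodParam q a b) : ContinuousOn q (Set.Icc a b) := by
  apply LipschitzOnWith.continuousOn (K := 1)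
  apply LipschitzOnWith.of_dist_le_mul
  intro x hx y hy
  simp [Real.dist_eq, hq x hx y hy]
lemma sub_geod {X : Type*} [MetricSpace X] {q : ℝ → X} {a b : ℝ}
    (hq : IsGeodParam q a b) {t₁ t₂ : ℝ} (h1 : t₁ ∈ Set.Icc a b) (h2 : t₂ ∈ Set.Icc a b) :
    ∃ h : ℝ → X, IsGeodParam h 0 (dist (q t₁) (q t₂)) ∧ h 0 = q t₁ ∧
      h (dist (q t₁) (q t₂)) = q t₂ ∧
      h '' Set.Icc 0 (dist (q t₁) (q t₂)) ⊆ q '' Set.Icc a b := by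
  rcases le_total t₁ t₂ with h | h
  · have hd : dist (q t₁) (q t₂) = t₂ - t₁ := by
      rw [hq _ h1 _ h2, abs_sub_comm, abs_of_nonneg (by linarith)]
    refine ⟨fun u => q (t₁ + u), ?_, by simp, by rw [hd]; ring_nf, ?_⟩
    · rw [hd]
      intro s hs t ht
      rw [hq (t₁ + s) ⟨by linarith [hs.1, h1.1], by linarith [hs.2, h2.2]⟩
          (t₁ + t) ⟨by linarith [ht.1, h1.1], by linarith [ht.2, h2.2]⟩]
      ring_nf
    · rw [hd]
      rintro x ⟨u, hu, rfl⟩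
      exact ⟨t₁ + u, ⟨by linarith [hu.1, h1.1], by linarith [hu.2, h2.2]⟩, rfl⟩
  · have hd : dist (q t₁) (q t₂) = t₁ - t₂ := by
      rw [hq _ h1 _ h2, abs_of_nonneg (by linarith)]
    refine ⟨fun u => q (t₁ - u), ?_, by simp, by rw [hd]; ring_nf, ?_⟩
    · rw [hd]
      intro s hs t ht
      rw [hq (t₁ - s) ⟨by linarith [hs.2, h2.1], by linarith [hs.1, h1.2]⟩
          (t₁ - t) ⟨by linarith [ht.2, h2.1], by linarith [ht.1, h1.2]⟩]
      rw [abs_sub_comm]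
      ring_nf
    · rw [hd]
      rintro x ⟨u, hu, rfl⟩
      exact ⟨t₁ - u, ⟨by linarith [hu.2, h2.1], by linarith [hu.1, h1.2]⟩, rfl⟩
lemma nearest {X : Type*} [MetricSpace X] {q : ℝ → X} {a b : ℝ} (hab : a ≤ b)
    (hq : ContinuousOn q (Set.Icc a b)) (x : X) :
    ∃ t ∈ Set.Icc a b, dist x (q t) = Metric.infDist x (q '' Set.Icc a b) := by
  have hc : IsCompact (q '' Set.Icc a b) := (isCompact_Icc).image_of_continuousOn hq
  obtain ⟨y, hy, hyd⟩ := hc.exists_infDist_eq_dist ((Set.nonempty_Icc.2 hab).image q) x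
  obtain ⟨t, ht, rfl⟩ := hy
  exact ⟨t, ht, hyd.symm⟩
lemma partA {X : Type*} [MetricSpace X] (hgeo : GeodesicSpace X)
    {δ : ℝ} (hδ : 0 ≤ δ) (hhyp : DeltaSlimSpace X δ)
    {k : ℝ} (hk : 8 * δ < k)
    {p : ℝ → X} {ℓ : ℝ} (hℓ : 0 ≤ ℓ) (hp : IsLocalGeodesic k p 0 ℓ)
    {q : ℝ → X} (hq : IsGeodParam q 0 (dist (p 0) (p ℓ)))
    (hq0 : q 0 = p 0) (hq1 : q (dist (p 0) (p ℓ)) = p ℓ) :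
    ∀ s ∈ Set.Icc (0 : ℝ) ℓ,
      Metric.infDist (p s) (q '' Set.Icc 0 (dist (p 0) (p ℓ))) ≤ 2 * δ := by
  have hk0 : 0 < k := lt_of_le_of_lt (by positivity) hk
  set L := dist (p 0) (p ℓ) with hL
  set Q := q '' Set.Icc 0 L with hQ
  have hL0 : 0 ≤ L := dist_nonneg
  have hp0Q : p 0 ∈ Q := ⟨0, Set.left_mem_Icc.2 hL0, hq0⟩
  have hpℓQ : p ℓ ∈ Q := ⟨L, Set.right_mem_Icc.2 hL0, hq1⟩
  have hf : ContinuousOn (fun u => Metric.infDist (p u) Q) (Set.Icc 0 ℓ) :=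
    (continuous_infDist_pt Q).comp_continuousOn (local_contOn hk0 hp)
  obtain ⟨s, hs, hmax'⟩ := isCompact_Icc.exists_isMaxOn (Set.nonempty_Icc.2 hℓ) hf
  have hmax : ∀ u ∈ Set.Icc (0:ℝ) ℓ, Metric.infDist (p u) Q ≤ Metric.infDist (p s) Q :=
    fun u hu => hmax' hu
  set D := Metric.infDist (p s) Q with hD
  suffices hDle : D ≤ 2 * δ by
    intro u hu; exact le_trans (hmax u hu) hDle
  -- set up the two flanking points
  set s₁ := max 0 (s - k/2) with hs₁def
  set s₂ := min ℓ (s + k/2) with hs₂def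
  have hs₁0 : 0 ≤ s₁ := le_max_left _ _
  have hs₁s : s₁ ≤ s := max_le hs.1 (by linarith)
  have hss₂ : s ≤ s₂ := le_min hs.2 (by linarith)
  have hs₂ℓ : s₂ ≤ ℓ := min_le_left _ _
  have hs₁k : s - s₁ ≤ k/2 := by
    have := le_max_right 0 (s - k/2); linarith
  have hs₂k : s₂ - s ≤ k/2 := by
    have := min_le_right ℓ (s + k/2); linarith
  have hs₁mem : s₁ ∈ Set.Icc (0:ℝ) ℓ := ⟨hs₁0, le_trans hs₁s hs.2⟩
  have hs₂mem : s₂ ∈ Set.Icc (0:ℝ) ℓ := ⟨le_trans hs.1 hss₂, hs₂ℓ⟩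
  have hs₁cases : s₁ = 0 ∨ s - s₁ = k/2 := by
    rcases le_total (s - k/2) 0 with h | h
    · left; simp [hs₁def, max_eq_left h]
    · right; rw [hs₁def, max_eq_right h]; ring
  have hs₂cases : s₂ = ℓ ∨ s₂ - s = k/2 := by
    rcases le_total ℓ (s + k/2) with h | h
    · left; simp [hs₂def, min_eq_left h]
    · right; rw [hs₂def, min_eq_right h]; ring
  -- distances along p
  have hd₁₂ : dist (p s₁) (p s₂) = s₂ - s₁ := by
    rw [hp _ hs₁mem _ hs₂mem (by rw [abs_sub_comm, abs_of_nonneg (by linarith)]; linarith),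
      abs_sub_comm, abs_of_nonneg (by linarith)]
  have hd₁s : dist (p s₁) (p s) = s - s₁ := by
    rw [hp _ hs₁mem _ hs (by rw [abs_sub_comm, abs_of_nonneg (by linarith)]; linarith),
      abs_sub_comm, abs_of_nonneg (by linarith)]
  have hd₂s : dist (p s₂) (p s) = s₂ - s := by
    rw [hp _ hs₂mem _ hs (by rw [abs_of_nonneg (by linarith)]; linarith),
      abs_of_nonneg (by linarith)]
  -- nearest points on q
  obtain ⟨t₁, ht₁, hnt₁⟩ := nearest hL0 (geod_contOn hq) (p s₁)
  obtain ⟨t₂, ht₂, hnt₂⟩ := nearest hL0 (geod_contOn hq) (p s₂)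
  have hf₁D : dist (p s₁) (q t₁) ≤ D := by rw [hnt₁]; exact hmax s₁ hs₁mem
  have hf₂D : dist (p s₂) (q t₂) ≤ D := by rw [hnt₂]; exact hmax s₂ hs₂mem
  -- geodesic sides
  obtain ⟨gy, hgy, hgy0, hgy1⟩ := hgeo (p s₁) (q t₁)
  obtain ⟨g, hg, hg0, hg1⟩ := hgeo (p s₂) (q t₁)
  obtain ⟨gz, hgz, hgz0, hgz1⟩ := hgeo (p s₂) (q t₂)
  obtain ⟨h, hh, hh0, hh1, hhQ⟩ := sub_geod hq ht₁ ht₂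
  -- the p-side from p s₁ to p s₂
  set P : ℝ → X := fun u => p (s₁ + u) with hPdef
  have hP : IsGeodParam P 0 (dist (p s₁) (p s₂)) := by
    rw [hd₁₂]
    intro u hu v hv
    rw [show P u = p (s₁ + u) from rfl, show P v = p (s₁ + v) from rfl,
      hp (s₁ + u) ⟨by linarith [hu.1], by linarith [hu.2]⟩
        (s₁ + v) ⟨by linarith [hv.1], by linarith [hv.2]⟩
        (by rw [show s₁ + u - (s₁ + v) = u - v by ring]
            calc |u - v| ≤ s₂ - s₁ := abs_sub_le_of_nonneg_of_le hu.1 (by linarith [hu.2]) hv.1 (by linarith [hv.2])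
              _ ≤ k := by linarith)]
    ring_nf
  have hP0 : P 0 = p s₁ := by simp [hPdef]
  have hP1 : P (dist (p s₁) (p s₂)) = p s₂ := by
    rw [hd₁₂, hPdef]; exact congrArg p (by ring)
  -- slimness of triangle 1
  have htri1 := hhyp (p s₁) (p s₂) (q t₁) P g gy hP hP0 hP1 hg hg0 hg1 hgy hgy0 hgy1
    (s - s₁) (by rw [hd₁₂]; exact ⟨by linarith, by linarith⟩)
  have hPs : P (s - s₁) = p s := congrArg p (by ring)
  rw [hPs] at htri1
  -- slimness of triangle 2
  have htri2 := hhyp (p s₂) (q t₁) (q t₂) g h gz hg hg0 hg1 hh hh0 hh1 hgz hgz0 hgz1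
  -- main estimate
  have main : ∀ ε : ℝ, 0 < ε → ε < (k/2 - 4*δ)/8 → D ≤ 2*δ + 4*ε := by
    intro ε hε hεk
    have hU1ne : (g '' Set.Icc 0 (dist (p s₂) (q t₁)) ∪
        gy '' Set.Icc 0 (dist (p s₁) (q t₁))).Nonempty :=
      Set.Nonempty.inl ((Set.nonempty_Icc.2 dist_nonneg).image g)
    obtain ⟨w, hw, hww⟩ := (Metric.infDist_lt_iff hU1ne).1 (lt_of_le_of_lt htri1 (show δ < δ + ε by linarith))
    rcases hw with hw | hw
    · -- w on side  p s₂ → q t₁  : apply triangle 2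
      obtain ⟨u, hu, rfl⟩ := hw
      have hgu : dist (p s₂) (g u) = u := by
        have := hg 0 (Set.left_mem_Icc.2 dist_nonneg) u hu
        rw [hg0] at this; rw [this, abs_sub_comm, sub_zero, abs_of_nonneg hu.1]
      have hU2ne : (h '' Set.Icc 0 (dist (q t₁) (q t₂)) ∪
          gz '' Set.Icc 0 (dist (p s₂) (q t₂))).Nonempty :=
        Set.Nonempty.inl ((Set.nonempty_Icc.2 dist_nonneg).image h)
      obtain ⟨v, hv, hvv⟩ := (Metric.infDist_lt_iff hU2ne).1
        (lt_of_le_of_lt (htri2 u hu) (show δ < δ + ε by linarith))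
      rcases hv with hv | hv
      · -- v on the q segment : D ≤ 2δ + 2ε
        have hvQ : v ∈ Q := hhQ hv
        calc D ≤ dist (p s) v := Metric.infDist_le_dist_of_mem hvQ
          _ ≤ dist (p s) (g u) + dist (g u) v := dist_triangle _ _ _
          _ ≤ 2*δ + 4*ε := by linarith
      · -- v on side p s₂ → q t₂
        obtain ⟨uv, huv, rfl⟩ := hv
        have hgzv : dist (p s₂) (gz uv) = uv := by
          have := hgz 0 (Set.left_mem_Icc.2 dist_nonneg) uv huv
          rw [hgz0] at this; rw [this, abs_sub_comm, sub_zero, abs_of_nonneg huv.1]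
        have hgzv2 : dist (gz uv) (q t₂) = dist (p s₂) (q t₂) - uv := by
          have := hgz uv huv (dist (p s₂) (q t₂)) (Set.right_mem_Icc.2 dist_nonneg)
          rw [hgz1] at this; rw [this, abs_of_nonpos (by linarith [huv.2]), neg_sub]
        have huvge : (s₂ - s) - (2*δ + 4*ε) ≤ uv := by
          have h1 : dist (p s₂) (p s) ≤ dist (p s₂) (gz uv) + dist (gz uv) (p s) := dist_triangle _ _ _
          have h2 : dist (gz uv) (p s) ≤ dist (gz uv) (g u) + dist (g u) (p s) := dist_triangle _ _ _
          rw [hd₂s] at h1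
          rw [dist_comm (gz uv) (g u)] at h2
          rw [dist_comm (g u) (p s)] at h2
          rw [hgzv] at h1
          linarith
        have hDle2 : D ≤ 2*δ + 4*ε + (dist (p s₂) (q t₂) - uv) := by
          calc D ≤ dist (p s) (q t₂) := Metric.infDist_le_dist_of_mem ⟨t₂, ht₂, rfl⟩
            _ ≤ dist (p s) (g u) + dist (g u) (gz uv) + dist (gz uv) (q t₂) :=
              dist_triangle4 _ _ _ _
            _ ≤ 2*δ + 4*ε + (dist (p s₂) (q t₂) - uv) := by rw [hgzv2]; linarith
        rcases hs₂cases with hcase | hcase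
        · -- s₂ = ℓ : then dist (p s₂) (q t₂) = 0
          have : dist (p s₂) (q t₂) = 0 := by
            rw [hnt₂, hcase, ← hQ]
            exact le_antisymm (le_of_le_of_eq (Metric.infDist_le_dist_of_mem hpℓQ) (dist_self _))
              Metric.infDist_nonneg
          linarith [huv.1]
        · -- s₂ - s = k/2 : contradiction
          exfalso
          have := hf₂D
          rw [hcase] at huvge
          linarith
    · -- w on side p s₁ → q t₁
      obtain ⟨u, hu, rfl⟩ := hw
      have hgyu : dist (p s₁) (gy u) = u := by
        have := hgy 0 (Set.left_mem_Icc.2 dist_nonneg) u hu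
        rw [hgy0] at this; rw [this, abs_sub_comm, sub_zero, abs_of_nonneg hu.1]
      have hgyu2 : dist (gy u) (q t₁) = dist (p s₁) (q t₁) - u := by
        have := hgy u hu (dist (p s₁) (q t₁)) (Set.right_mem_Icc.2 dist_nonneg)
        rw [hgy1] at this; rw [this, abs_of_nonpos (by linarith [hu.2]), neg_sub]
      have huge : (s - s₁) - (δ + ε) ≤ u := by
        have h1 : dist (p s₁) (p s) ≤ dist (p s₁) (gy u) + dist (gy u) (p s) := dist_triangle _ _ _
        rw [hd₁s, hgyu, dist_comm (gy u) (p s)] at h1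
        linarith
      have hDle1 : D ≤ δ + ε + (dist (p s₁) (q t₁) - u) := by
        calc D ≤ dist (p s) (q t₁) := Metric.infDist_le_dist_of_mem ⟨t₁, ht₁, rfl⟩
          _ ≤ dist (p s) (gy u) + dist (gy u) (q t₁) := dist_triangle _ _ _
          _ ≤ δ + ε + (dist (p s₁) (q t₁) - u) := by rw [hgyu2]; linarith
      rcases hs₁cases with hcase | hcase
      · -- s₁ = 0 : dist (p s₁) (q t₁) = 0
        have : dist (p s₁) (q t₁) = 0 := by
          rw [hnt₁, hcase, ← hQ]
          exact le_antisymm (le_of_le_of_eq (Metric.infDist_le_dist_of_mem hp0Q) (dist_self _))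
            Metric.infDist_nonneg
        linarith [hu.1]
      · exfalso
        have := hf₁D
        rw [hcase] at huge
        linarith
  -- conclude
  by_contra hDgt
  push_neg at hDgt
  set ε := min ((k/2 - 4*δ)/16) ((D - 2*δ)/8) with hεdef
  have hε : 0 < ε := lt_min (by linarith) (by linarith)
  have h1 := main ε hε (lt_of_le_of_lt (min_le_left _ _) (by linarith))
  have h2 : ε ≤ (D - 2*δ)/8 := min_le_right _ _
  linarith
lemma partB {X : Type*} [MetricSpace X] (hgeo : GeodesicSpace X)
    {δ : ℝ} (hδ : 0 ≤ δ) (hhyp : DeltaSlimSpace X δ)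
    {k : ℝ} (hk : 8 * δ < k)
    {p : ℝ → X} {ℓ : ℝ} (hℓ : 0 ≤ ℓ) (hp : IsLocalGeodesic k p 0 ℓ)
    {q : ℝ → X} (hq : IsGeodParam q 0 (dist (p 0) (p ℓ)))
    (hq0 : q 0 = p 0) (hq1 : q (dist (p 0) (p ℓ)) = p ℓ) :
    ∀ t ∈ Set.Icc (0 : ℝ) (dist (p 0) (p ℓ)),
      Metric.infDist (q t) (p '' Set.Icc 0 ℓ) ≤ 3 * δ := by
  intro t ht
  have hk0 : 0 < k := lt_of_le_of_lt (by positivity) hk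
  set L := dist (p 0) (p ℓ) with hLdef
  set Q := q '' Set.Icc 0 L with hQ
  have hL0 : 0 ≤ L := dist_nonneg
  have hA := partA hgeo hδ hhyp hk hℓ hp hq hq0 hq1
  set f₁ : ℝ → ℝ := fun s => Metric.infDist (p s) (q '' Set.Icc 0 t) with hf₁
  set f₂ : ℝ → ℝ := fun s => Metric.infDist (p s) (q '' Set.Icc t L) with hf₂
  have hcont : ContinuousOn (fun s => f₁ s - f₂ s) (Set.Icc 0 ℓ) :=
    ((continuous_infDist_pt _).comp_continuousOn (local_contOn hk0 hp)).sub
      ((continuous_infDist_pt _).comp_continuousOn (local_contOn hk0 hp))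
  have hg0 : f₁ 0 - f₂ 0 ≤ 0 := by
    have h1 : f₁ 0 = 0 := Metric.infDist_zero_of_mem ⟨0, Set.left_mem_Icc.2 ht.1, hq0⟩
    have h2 : 0 ≤ f₂ 0 := Metric.infDist_nonneg
    linarith
  have hgℓ : 0 ≤ f₁ ℓ - f₂ ℓ := by
    have h1 : f₂ ℓ = 0 := Metric.infDist_zero_of_mem ⟨L, Set.right_mem_Icc.2 ht.2, hq1⟩
    have h2 : 0 ≤ f₁ ℓ := Metric.infDist_nonneg
    linarith
  obtain ⟨s, hs, hgs⟩ : ∃ s ∈ Set.Icc (0:ℝ) ℓ, f₁ s - f₂ s = 0 := by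
    have := intermediate_value_Icc hℓ hcont ⟨hg0, hgℓ⟩
    obtain ⟨s, hs, hgs⟩ := this
    exact ⟨s, hs, hgs⟩
  -- both projections are within 2δ
  obtain ⟨t', ht', hnt'⟩ := nearest hL0 (geod_contOn hq) (p s)
  have ht'2δ : dist (p s) (q t') ≤ 2*δ := by rw [hnt', ← hQ]; exact hA s hs
  have hboth : f₁ s ≤ 2*δ ∧ f₂ s ≤ 2*δ := by
    rcases le_total t' t with h | h
    · have h1 : f₁ s ≤ 2*δ :=
        le_trans (Metric.infDist_le_dist_of_mem ⟨t', ⟨ht'.1, h⟩, rfl⟩) ht'2δ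
      exact ⟨h1, by linarith⟩
    · have h2 : f₂ s ≤ 2*δ :=
        le_trans (Metric.infDist_le_dist_of_mem ⟨t', ⟨h, ht'.2⟩, rfl⟩) ht'2δ
      exact ⟨by linarith, h2⟩
  obtain ⟨t₁, ht₁, hn₁⟩ := nearest ht.1 ((geod_contOn hq).mono (Set.Icc_subset_Icc le_rfl ht.2)) (p s)
  obtain ⟨t₂, ht₂, hn₂⟩ := nearest ht.2 ((geod_contOn hq).mono (Set.Icc_subset_Icc ht.1 le_rfl)) (p s)
  have hd₁ : dist (p s) (q t₁) ≤ 2*δ := by rw [hn₁]; exact hboth.1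
  have hd₂ : dist (p s) (q t₂) ≤ 2*δ := by rw [hn₂]; exact hboth.2
  have ht₁L : t₁ ∈ Set.Icc (0:ℝ) L := ⟨ht₁.1, le_trans ht₁.2 ht.2⟩
  have ht₂L : t₂ ∈ Set.Icc (0:ℝ) L := ⟨le_trans ht.1 ht₂.1, ht₂.2⟩
  have h12 : t₁ ≤ t₂ := le_trans ht₁.2 ht₂.1
  have hd12 : dist (q t₁) (q t₂) = t₂ - t₁ := by
    rw [hq _ ht₁L _ ht₂L, abs_sub_comm, abs_of_nonneg (by linarith)]
  set P : ℝ → X := fun u => q (t₁ + u) with hPdef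
  have hP : IsGeodParam P 0 (dist (q t₁) (q t₂)) := by
    rw [hd12]
    intro u hu v hv
    rw [show P u = q (t₁ + u) from rfl, show P v = q (t₁ + v) from rfl,
      hq (t₁ + u) ⟨by linarith [hu.1, ht₁L.1], by linarith [hu.2, ht₂L.2]⟩
        (t₁ + v) ⟨by linarith [hv.1, ht₁L.1], by linarith [hv.2, ht₂L.2]⟩]
    ring_nf
  have hP0 : P 0 = q t₁ := congrArg q (by ring)
  have hP1 : P (dist (q t₁) (q t₂)) = q t₂ := by rw [hd12]; exact congrArg q (by ring)
  obtain ⟨h₂, hh₂, hh₂0, hh₂1⟩ := hgeo (q t₂) (p s)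
  obtain ⟨h₁, hh₁, hh₁0, hh₁1⟩ := hgeo (q t₁) (p s)
  have htri := hhyp (q t₁) (q t₂) (p s) P h₂ h₁ hP hP0 hP1 hh₂ hh₂0 hh₂1 hh₁ hh₁0 hh₁1
    (t - t₁) (by rw [hd12]; exact ⟨by linarith [ht₁.2], by linarith [ht₂.1]⟩)
  have hPt : P (t - t₁) = q t := congrArg q (by ring)
  rw [hPt] at htri
  -- conclude
  refine le_of_forall_pos_le_add ?_
  intro ε hε
  have hUne : (h₂ '' Set.Icc 0 (dist (q t₂) (p s)) ∪ h₁ '' Set.Icc 0 (dist (q t₁) (p s))).Nonempty :=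
    Set.Nonempty.inl ((Set.nonempty_Icc.2 dist_nonneg).image h₂)
  obtain ⟨a, ha, haa⟩ := (Metric.infDist_lt_iff hUne).1
    (lt_of_le_of_lt htri (show δ < δ + ε by linarith))
  have haps : dist a (p s) ≤ 2*δ := by
    rcases ha with ⟨u, hu, rfl⟩ | ⟨u, hu, rfl⟩
    · have := hh₂ u hu (dist (q t₂) (p s)) (Set.right_mem_Icc.2 dist_nonneg)
      rw [hh₂1] at this
      rw [this, abs_of_nonpos (by linarith [hu.2]), neg_sub]
      rw [dist_comm] at hd₂
      linarith [hu.1]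
    · have := hh₁ u hu (dist (q t₁) (p s)) (Set.right_mem_Icc.2 dist_nonneg)
      rw [hh₁1] at this
      rw [this, abs_of_nonpos (by linarith [hu.2]), neg_sub]
      rw [dist_comm] at hd₁
      linarith [hu.1]
  calc Metric.infDist (q t) (p '' Set.Icc 0 ℓ)
      ≤ dist (q t) (p s) := Metric.infDist_le_dist_of_mem ⟨s, hs, rfl⟩
    _ ≤ dist (q t) a + dist a (p s) := dist_triangle _ _ _
    _ ≤ 3*δ + ε := by linarith
lemma partC {X : Type*} [MetricSpace X] (hgeo : GeodesicSpace X)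
    {δ : ℝ} (hδ : 0 ≤ δ) (hhyp : DeltaSlimSpace X δ)
    {k : ℝ} (hk : 8 * δ < k) :
    ∀ n : ℕ, ∀ p : ℝ → X, ∀ ℓ : ℝ, 0 ≤ ℓ → ℓ ≤ n * k → IsLocalGeodesic k p 0 ℓ →
      ℓ ≤ (k + 4*δ)/(k - 4*δ) * dist (p 0) (p ℓ) + 2*δ := by
  have hk0 : 0 < k := lt_of_le_of_lt (by positivity) hk
  have hk4 : 0 < k - 4*δ := by linarith
  set lam := (k + 4*δ)/(k - 4*δ) with hlam
  have hlam1 : 1 ≤ lam := (le_div_iff₀ hk4).2 (by linarith)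
  have hlam0 : 0 ≤ lam := by linarith
  have hlamk : lam * (k - 4*δ) = k + 4*δ := div_mul_cancel₀ _ (ne_of_gt hk4)
  intro n
  induction n with
  | zero =>
    intro p ℓ hℓ hle hp
    have hℓ0 : ℓ = 0 := le_antisymm (by simpa using hle) hℓ
    subst hℓ0
    have : 0 ≤ lam * dist (p 0) (p 0) := mul_nonneg hlam0 dist_nonneg
    linarith
  | succ n ih =>
    intro p ℓ hℓ hle hp
    rcases le_or_gt ℓ k with hcase | hcase
    · have hd : dist (p 0) (p ℓ) = ℓ := by
        rw [hp 0 ⟨le_rfl, hℓ⟩ ℓ ⟨hℓ, le_rfl⟩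
          (by rw [abs_sub_comm, sub_zero, abs_of_nonneg hℓ]; exact hcase),
          abs_sub_comm, sub_zero, abs_of_nonneg hℓ]
      rw [hd]
      nlinarith [mul_le_mul_of_nonneg_right hlam1 hℓ]
    · set m := ℓ - k with hm
      have hm0 : 0 ≤ m := by linarith
      have hmℓ : m ≤ ℓ := by linarith
      have hp' : IsLocalGeodesic k p 0 m := fun u hu v hv hk' =>
        hp u ⟨hu.1, le_trans hu.2 hmℓ⟩ v ⟨hv.1, le_trans hv.2 hmℓ⟩ hk'
      have IH := ih p m hm0 (by push_cast at hle ⊢; linarith) hp'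
      obtain ⟨q, hq, hq0, hq1⟩ := hgeo (p 0) (p ℓ)
      have hA := partA hgeo hδ hhyp hk hℓ hp hq hq0 hq1 m ⟨hm0, hmℓ⟩
      set L := dist (p 0) (p ℓ) with hLdef
      obtain ⟨u, hu, hnu⟩ := nearest dist_nonneg (geod_contOn hq) (p m)
      have h2δ : dist (p m) (q u) ≤ 2*δ := by rw [hnu]; exact hA
      have h1 : dist (p 0) (q u) = u := by
        have := hq 0 (Set.left_mem_Icc.2 dist_nonneg) u hu
        rw [hq0] at this
        rw [this, abs_sub_comm, sub_zero, abs_of_nonneg hu.1]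
      have h2 : dist (q u) (p ℓ) = L - u := by
        have := hq u hu L (Set.right_mem_Icc.2 dist_nonneg)
        rw [hq1] at this
        rw [this, abs_of_nonpos (by linarith [hu.2]), neg_sub]
      have h3 : dist (p m) (p ℓ) = k := by
        rw [hp m ⟨hm0, hmℓ⟩ ℓ ⟨hℓ, le_rfl⟩
          (by rw [show m - ℓ = -k by rw [hm]; ring, abs_neg, abs_of_pos hk0]),
          show m - ℓ = -k by rw [hm]; ring, abs_neg, abs_of_pos hk0]
      have h4 : dist (p 0) (p m) - 2*δ ≤ u := by
        have := dist_triangle (p 0) (q u) (p m)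
        rw [h1, dist_comm (q u) (p m)] at this
        linarith
      have h5 : k - 2*δ ≤ L - u := by
        have := dist_triangle (p m) (q u) (p ℓ)
        rw [h2, h3] at this
        linarith
      have h7 : dist (p 0) (p m) + (k - 4*δ) ≤ L := by linarith
      have h8 : lam * (dist (p 0) (p m) + (k - 4*δ)) ≤ lam * L :=
        mul_le_mul_of_nonneg_left h7 hlam0
      have h9 : lam * (dist (p 0) (p m) + (k - 4*δ)) = lam * dist (p 0) (p m) + (k + 4*δ) := by
        rw [mul_add, hlamk]
      linarith

theorem stmt11 {X : Type*} [MetricSpace X] (hgeo : GeodesicSpace X)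
    (δ : ℝ) (hδ : 0 ≤ δ) (hhyp : DeltaSlimSpace X δ)
    (k : ℝ) (hk : 8 * δ < k)
    (p : ℝ → X) (ℓ : ℝ) (hℓ : 0 ≤ ℓ) (hp : IsLocalGeodesic k p 0 ℓ)
    (q : ℝ → X) (hq : IsGeodParam q 0 (dist (p 0) (p ℓ)))
    (hq0 : q 0 = p 0) (hq1 : q (dist (p 0) (p ℓ)) = p ℓ) :
    (∀ s ∈ Set.Icc (0 : ℝ) ℓ,
      Metric.infDist (p s) (q '' Set.Icc 0 (dist (p 0) (p ℓ))) ≤ 2 * δ) ∧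
    (∀ t ∈ Set.Icc (0 : ℝ) (dist (p 0) (p ℓ)),
      Metric.infDist (q t) (p '' Set.Icc 0 ℓ) ≤ 3 * δ) ∧
    (∀ s ∈ Set.Icc (0 : ℝ) ℓ, ∀ t ∈ Set.Icc (0 : ℝ) ℓ,
      |s - t| ≤ (k + 4 * δ) / (k - 4 * δ) * dist (p s) (p t) + 2 * δ) := by
  have hk0 : 0 < k := lt_of_le_of_lt (by positivity) hk
  refine ⟨partA hgeo hδ hhyp hk hℓ hp hq hq0 hq1,
    partB hgeo hδ hhyp hk hℓ hp hq hq0 hq1, ?_⟩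
  have key : ∀ s ∈ Set.Icc (0:ℝ) ℓ, ∀ t ∈ Set.Icc (0:ℝ) ℓ, s ≤ t →
      t - s ≤ (k + 4 * δ) / (k - 4 * δ) * dist (p s) (p t) + 2 * δ := by
    intro s hs t ht hst
    set p' : ℝ → X := fun u => p (s + u) with hp'def
    have hp' : IsLocalGeodesic k p' 0 (t - s) := by
      intro u hu v hv hkuv
      rw [show p' u = p (s + u) from rfl, show p' v = p (s + v) from rfl,
        hp (s + u) ⟨by linarith [hu.1, hs.1], by linarith [hu.2, ht.2]⟩
          (s + v) ⟨by linarith [hv.1, hs.1], by linarith [hv.2, ht.2]⟩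
          (by rw [show s + u - (s + v) = u - v by ring]; exact hkuv)]
      ring_nf
    have hle : t - s ≤ (⌈(t - s)/k⌉₊ : ℕ) * k := by
      calc t - s = (t - s)/k * k := by field_simp
        _ ≤ (⌈(t - s)/k⌉₊ : ℕ) * k := by gcongr; exact Nat.le_ceil _
    have := partC hgeo hδ hhyp hk ⌈(t - s)/k⌉₊ p' (t - s) (by linarith) hle hp'
    have e0 : p' 0 = p s := congrArg p (by ring)
    have e1 : p' (t - s) = p t := congrArg p (by ring)
    rw [e0, e1] at this
    exact this
  intro s hs t ht
  rcases le_total s t with h | h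
  · rw [abs_sub_comm, abs_of_nonneg (by linarith)]
    exact key s hs t ht h
  · rw [abs_of_nonneg (by linarith), dist_comm]
    exact key t ht s hs h
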